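/- Let u : ℝ² → ℝ be three times continuously differentiable with |D³u(q)[e,e,e]| ≤ K·|e|³ for all q, e ∈ ℝ². Let x₁ ≠ x₂ ∈ ℝ², h = |x₂ − x₁|, m = (x₁ + x₂)/2, and suppose K·h² ≤ 1. Then there exists a unit vector w ∈ ℝ³ with w·(x₂ − x₁, u(x₂) − u(x₁)) = 0 and |w − 𝐧(∇u(m))| ≤ K·h². -/

import Mathlib

open scoped RealInnerProductSpace

noncomputable section

/-- Euclidean plane and 3-space. -/
abbrev E2 := EuclideanSpace ℝ (Fin 2)
abbrev E3 := EuclideanSpace ℝ (Fin 3)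

/-- The vector `(v, t) ∈ ℝ³` with first two components `v ∈ ℝ²` and last
component `t ∈ ℝ`. -/
def toR3 (v : E2) (t : ℝ) : E3 :=
  (WithLp.equiv 2 (Fin 3 → ℝ)).symm ![v 0, v 1, t]

/-- The upward unit normal `𝐧(p) = (−p, 1)/√(1+|p|²)` of a graph with
gradient `p`. -/
def gauss (p : E2) : E3 := (Real.sqrt (1 + ‖p‖ ^ 2))⁻¹ • toR3 (-p) 1

lemma vec3_const {α : Type*} (e : α) : ![e, e, e] = fun _ : Fin 3 => e := by
  funext i; fin_cases i <;> rfl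

lemma idw_eq {g : ℝ → ℝ} (hg : ContDiff ℝ 3 g)
    {s : Set ℝ} (hs : UniqueDiffOn ℝ s) {n : ℕ} (hn : n ≤ 3) :
    ∀ x ∈ s, iteratedDerivWithin n g s x = iteratedDeriv n g x := by
  induction n with
  | zero => intro x hx; simp
  | succ n ih =>
    intro x hx
    rw [iteratedDerivWithin_succ, iteratedDeriv_succ,
      derivWithin_congr (fun y hy => ih (by omega) y hy) (ih (by omega) x hx)]
    exact ((hg.differentiable_iteratedDeriv n
      (by exact_mod_cast Nat.lt_of_lt_of_le (Nat.lt_succ_self n) hn)) x).derivWithin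
      (hs.uniqueDiffWithinAt hx)

lemma taylor3 {g : ℝ → ℝ} (hg : ContDiff ℝ 3 g) {M : ℝ}
    (hM : ∀ t ∈ Set.Icc (0:ℝ) 1, |iteratedDeriv 3 g t| ≤ M) :
    |g 1 - g 0 - iteratedDeriv 1 g 0 - iteratedDeriv 2 g 0 / 2| ≤ M / 6 := by
  have hs : UniqueDiffOn ℝ (Set.Icc (0:ℝ) 1) := uniqueDiffOn_Icc one_pos
  have h0 : (0:ℝ) ∈ Set.Icc (0:ℝ) 1 := by norm_num
  obtain ⟨x', hx', hT⟩ := taylor_mean_remainder_lagrange (f := g) (n := 2) (x₀ := 0) (x := 1) zero_ne_one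
    (by rw [Set.uIcc_of_le zero_le_one]; exact (hg.of_le (by norm_num)).contDiffOn)
    (by rw [Set.uIcc_of_le zero_le_one, Set.uIoo_of_le zero_le_one]; exact
      (((hg.contDiffOn).differentiableOn_iteratedDerivWithin (by norm_num) hs).mono
      Set.Ioo_subset_Icc_self))
  rw [Set.uIcc_of_le zero_le_one] at hT
  rw [Set.uIoo_of_le zero_le_one] at hx'
  rw [taylor_within_apply] at hT
  simp only [Finset.sum_range_succ, Finset.sum_range_zero] at hT
  rw [idw_eq hg hs (by norm_num) 0 h0, idw_eq hg hs (by norm_num) 0 h0,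
    idw_eq hg hs (by norm_num) 0 h0,
    idw_eq hg hs (by norm_num) x' (Set.Ioo_subset_Icc_self hx')] at hT
  have hb := hM x' (Set.Ioo_subset_Icc_self hx')
  norm_num [Nat.factorial] at hT
  rw [iteratedDeriv_one]
  have := abs_le.mp hb
  rw [abs_le]
  constructor <;> nlinarith [hT]

lemma iteratedFDeriv_translation {u : E2 → ℝ} (hu : ContDiff ℝ 3 u) (m : E2)
    {n : ℕ} (hn : n ≤ 3) :
    iteratedFDeriv ℝ n (fun x => u (m + x)) = fun x => iteratedFDeriv ℝ n u (m + x) := by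
  induction n with
  | zero =>
    funext x; ext v; simp [iteratedFDeriv_zero_apply]
  | succ n ih =>
    funext x; ext v
    have hdiff : DifferentiableAt ℝ (iteratedFDeriv ℝ n u) (m + x) :=
      (hu.differentiable_iteratedFDeriv (by exact_mod_cast hn)) (m + x)
    have hfd : fderiv ℝ (fun y => iteratedFDeriv ℝ n u (m + y)) x
        = fderiv ℝ (iteratedFDeriv ℝ n u) (m + x) := by
      have h1 : HasFDerivAt (fun y : E2 => iteratedFDeriv ℝ n u (m + y))
          ((fderiv ℝ (iteratedFDeriv ℝ n u) (m + x)).comp (ContinuousLinearMap.id ℝ E2)) x :=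
        hdiff.hasFDerivAt.comp x ((hasFDerivAt_id x).const_add m)
      simpa using h1.fderiv
    rw [iteratedFDeriv_succ_apply_left, iteratedFDeriv_succ_apply_left,
      ih (by omega), hfd]

lemma line_deriv {u : E2 → ℝ} (hu : ContDiff ℝ 3 u) (m d : E2) {n : ℕ} (hn : n ≤ 3) (t : ℝ) :
    iteratedDeriv n (fun s : ℝ => u (m + s • d)) t
      = iteratedFDeriv ℝ n u (m + t • d) (fun _ => d) := by
  have hτ : ContDiff ℝ 3 (fun x : E2 => u (m + x)) := hu.comp (contDiff_const.add contDiff_id)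
  set L : ℝ →L[ℝ] E2 := (ContinuousLinearMap.id ℝ ℝ).smulRight d with hL
  have hfun : (fun s : ℝ => u (m + s • d)) = (fun x : E2 => u (m + x)) ∘ L := by
    funext s; simp [hL]
  rw [iteratedDeriv_eq_iteratedFDeriv, hfun,
    L.iteratedFDeriv_comp_right hτ t (by exact_mod_cast hn)]
  simp [hL, iteratedFDeriv_translation hu m hn]

lemma grad_inner {u : E2 → ℝ} (m y : E2) :
    ⟪gradient u m, y⟫ = fderiv ℝ u m y := by
  rw [gradient, InnerProductSpace.toDual_symm_apply]

lemma chord_est {u : E2 → ℝ} (hu : ContDiff ℝ 3 u) {K : ℝ}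
    (hbound : ∀ q e : E2, |iteratedFDeriv ℝ 3 u q ![e, e, e]| ≤ K * ‖e‖ ^ 3)
    (m d : E2) :
    |u (m + d) - u (m - d) - 2 * ⟪gradient u m, d⟫| ≤ K * ‖d‖ ^ 3 / 3 := by
  have hline : ∀ e : E2, ContDiff ℝ 3 (fun s : ℝ => u (m + s • e)) :=
    fun e => hu.comp (contDiff_const.add (contDiff_id.smul contDiff_const))
  have hb : ∀ e : E2, ‖e‖ = ‖d‖ → ∀ t ∈ Set.Icc (0:ℝ) 1,
      |iteratedDeriv 3 (fun s : ℝ => u (m + s • e)) t| ≤ K * ‖d‖ ^ 3 := by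
    intro e he t _
    rw [line_deriv hu m e le_rfl t, ← vec3_const e, ← he]
    exact hbound _ e
  have hA := taylor3 (hline d) (hb d rfl)
  have hB := taylor3 (hline (-d)) (hb (-d) (norm_neg d))
  rw [line_deriv hu m d (by norm_num), line_deriv hu m d (by norm_num)] at hA
  rw [line_deriv hu m (-d) (by norm_num), line_deriv hu m (-d) (by norm_num)] at hB
  simp only [zero_smul, add_zero, one_smul] at hA hB
  have h1 : iteratedFDeriv ℝ 1 u m (fun _ => -d) = - iteratedFDeriv ℝ 1 u m (fun _ => d) := by
    have : (fun _ : Fin 1 => -d) = fun i : Fin 1 => (-1 : ℝ) • d := by funext i; simp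
    rw [this, (iteratedFDeriv ℝ 1 u m).map_smul_univ]
    simp
  have h2 : iteratedFDeriv ℝ 2 u m (fun _ => -d) = iteratedFDeriv ℝ 2 u m (fun _ => d) := by
    have : (fun _ : Fin 2 => -d) = fun i : Fin 2 => (-1 : ℝ) • d := by funext i; simp
    rw [this, (iteratedFDeriv ℝ 2 u m).map_smul_univ]
    simp [Fin.prod_univ_two]
  rw [h1, h2] at hB
  have hgrad : ⟪gradient u m, d⟫ = iteratedFDeriv ℝ 1 u m (fun _ => d) := by
    rw [grad_inner, iteratedFDeriv_one_apply]
  rw [show m + -d = m - d from (sub_eq_add_neg m d).symm] at hB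
  rw [hgrad]
  have := abs_le.mp hA
  have := abs_le.mp hB
  rw [abs_le]
  constructor <;> nlinarith

lemma inner_toR3 (v v' : E2) (t t' : ℝ) :
    ⟪toR3 v t, toR3 v' t'⟫ = ⟪v, v'⟫ + t * t' := by
  simp [toR3, PiLp.inner_apply, RCLike.inner_apply, Fin.sum_univ_three, Fin.sum_univ_two,
    WithLp.equiv_symm_apply, mul_comm]

lemma ortho_approx {H : Type*} [NormedAddCommGroup H] [InnerProductSpace ℝ H]
    (n c : H) (hn : ‖n‖ = 1) {δ : ℝ} (hδ0 : 0 ≤ δ) (hδ24 : δ ≤ 1/24)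
    (hc : 0 < ‖c‖) (ht : |⟪n, c⟫| ≤ δ * ‖c‖) :
    ∃ w : H, ‖w‖ = 1 ∧ ⟪w, c⟫ = 0 ∧ ‖w - n‖ ≤ δ + δ ^ 2 := by
  set t : ℝ := ⟪n, c⟫ with htdef
  set a : ℝ := t / ‖c‖ ^ 2 with ha
  set v : H := n - a • c with hv
  set ε : ℝ := |t| / ‖c‖ with hε
  have hεnn : 0 ≤ ε := by positivity
  have hεδ : ε ≤ δ := by rw [hε, div_le_iff₀ hc]; exact ht
  have hvc : ⟪v, c⟫ = 0 := by
    rw [hv, inner_sub_left, real_inner_smul_left, ← htdef, real_inner_self_eq_norm_sq, ha]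
    field_simp
    ring
  have hvsq : ‖v‖ ^ 2 = 1 - ε ^ 2 := by
    have expand : ‖v‖ ^ 2 = ‖n‖ ^ 2 - 2 * ⟪n, a • c⟫ + ‖a • c‖ ^ 2 := by
      rw [hv, ← real_inner_self_eq_norm_sq, inner_sub_sub_self,
        real_inner_self_eq_norm_sq, real_inner_self_eq_norm_sq,
        real_inner_comm (a • c) n]
      ring
    rw [expand, hn, real_inner_smul_right, ← htdef, norm_smul, Real.norm_eq_abs, mul_pow,
      sq_abs, ha, hε]
    simp only [div_pow, sq_abs]
    field_simp
    ring
  have hεsq : ε ^ 2 ≤ 1 / 576 := by nlinarith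
  have h2 : 0 < ‖v‖ ^ 2 := by rw [hvsq]; linarith
  have hvpos : 0 < ‖v‖ := by
    rcases (norm_nonneg v).lt_or_eq with h | h
    · exact h
    · exfalso; rw [← h] at h2; simp at h2
  have hvle1 : ‖v‖ ≤ 1 := by nlinarith
  have hvge : 1 - ε ^ 2 ≤ ‖v‖ := by nlinarith
  refine ⟨‖v‖⁻¹ • v, ?_, ?_, ?_⟩
  · rw [norm_smul, norm_inv, norm_norm, inv_mul_cancel₀ (ne_of_gt hvpos)]
  · rw [real_inner_smul_left, hvc, mul_zero]
  · have step1 : ‖‖v‖⁻¹ • v - v‖ = 1 - ‖v‖ := by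
      rw [show ‖v‖⁻¹ • v - v = (‖v‖⁻¹ - 1) • v by rw [sub_smul, one_smul],
        norm_smul, Real.norm_eq_abs, abs_of_nonneg, sub_mul,
        inv_mul_cancel₀ (ne_of_gt hvpos), one_mul]
      rw [sub_nonneg]
      exact (one_le_inv_iff₀.mpr ⟨hvpos, hvle1⟩)
    have step2 : ‖v - n‖ = ε := by
      rw [hv, sub_sub_cancel_left, norm_neg, norm_smul, Real.norm_eq_abs, ha, hε, abs_div,
        abs_of_nonneg (by positivity : (0:ℝ) ≤ ‖c‖ ^ 2),
        pow_two, ← div_div, div_mul_cancel₀ _ (ne_of_gt hc)]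
    calc ‖‖v‖⁻¹ • v - n‖ ≤ ‖‖v‖⁻¹ • v - v‖ + ‖v - n‖ :=
          norm_sub_le_norm_sub_add_norm_sub _ _ _
      _ = (1 - ‖v‖) + ε := by rw [step1, step2]
      _ ≤ ε ^ 2 + ε := by linarith
      _ ≤ δ + δ ^ 2 := by nlinarith

lemma arith1 {K h : ℝ} (hK : 0 ≤ K) (hh : 0 < h) (hsmall : K * h ^ 2 ≤ 1) :
    K * h ^ 2 / 24 ≤ 1 / 24 := by nlinarith

lemma arith2 {K h : ℝ} (hK : 0 ≤ K) (hh : 0 < h) (hsmall : K * h ^ 2 ≤ 1) :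
    K * h ^ 2 / 24 + (K * h ^ 2 / 24) ^ 2 ≤ K * h ^ 2 := by
  have hX : 0 ≤ K * h ^ 2 := by positivity
  nlinarith [mul_le_of_le_one_left hX hsmall]

theorem stmt_9 (u : E2 → ℝ) (hu : ContDiff ℝ 3 u) (K : ℝ)
    (hbound : ∀ q e : E2, |iteratedFDeriv ℝ 3 u q ![e, e, e]| ≤ K * ‖e‖ ^ 3)
    (x₁ x₂ : E2) (hne : x₁ ≠ x₂)
    (hsmall : K * ‖x₂ - x₁‖ ^ 2 ≤ 1) :
    ∃ w : E3, ‖w‖ = 1 ∧ ⟪w, toR3 (x₂ - x₁) (u x₂ - u x₁)⟫ = 0 ∧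
      ‖w - gauss (gradient u (midpoint ℝ x₁ x₂))‖ ≤ K * ‖x₂ - x₁‖ ^ 2 := by
  set m : E2 := midpoint ℝ x₁ x₂ with hm
  set p : E2 := gradient u m with hp
  set h : ℝ := ‖x₂ - x₁‖ with hhdef
  have hh : 0 < h := by
    rw [hhdef]; rw [norm_pos_iff, sub_ne_zero]; exact fun e => hne e.symm
  have hK : 0 ≤ K := by
    have hb := hbound 0 (EuclideanSpace.single 0 (1:ℝ))
    rw [EuclideanSpace.norm_single] at hb
    simp only [norm_one, one_pow, mul_one] at hb
    exact le_trans (abs_nonneg _) hb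
  -- Taylor estimate
  set q : ℝ := u x₂ - u x₁ with hq
  have hE : |q - ⟪p, x₂ - x₁⟫| ≤ K * h ^ 3 / 24 := by
    set d : E2 := (2:ℝ)⁻¹ • (x₂ - x₁) with hd
    have hm2 : m = (⅟(2:ℝ)) • (x₁ + x₂) := midpoint_eq_smul_add ℝ x₁ x₂
    rw [invOf_eq_inv] at hm2
    have hx2 : m + d = x₂ := by rw [hm2, hd]; module
    have hx1 : m - d = x₁ := by rw [hm2, hd]; module
    have h2d : x₂ - x₁ = (2:ℝ) • d := by rw [hd]; module
    have hnd : ‖d‖ = h / 2 := by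
      rw [hd, norm_smul, hhdef]; simp [norm_inv]; ring
    have := chord_est hu hbound m d
    rw [hx2, hx1, hnd] at this
    rw [h2d, real_inner_smul_right]
    calc |q - 2 * ⟪p, d⟫| ≤ K * (h/2) ^ 3 / 3 := this
      _ = K * h ^ 3 / 24 := by ring
  -- geometry
  set c : E3 := toR3 (x₂ - x₁) q with hc
  set s : ℝ := Real.sqrt (1 + ‖p‖ ^ 2) with hs
  have hs1 : 1 ≤ s := by
    rw [hs, show (1:ℝ) = Real.sqrt 1 from Real.sqrt_one.symm]
    exact Real.sqrt_le_sqrt (by nlinarith [sq_nonneg ‖p‖, Real.sqrt_one])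
  have hssq : s ^ 2 = 1 + ‖p‖ ^ 2 := Real.sq_sqrt (by positivity)
  have hspos : 0 < s := lt_of_lt_of_le one_pos hs1
  have hgauss_eq : gauss p = s⁻¹ • toR3 (-p) 1 := by rw [gauss, hs]
  have hgn : ‖gauss p‖ = 1 := by
    rw [hgauss_eq, norm_smul, norm_inv, Real.norm_eq_abs, abs_of_pos hspos]
    have hts : ‖toR3 (-p) 1‖ = s := by
      have h2 : ‖toR3 (-p) 1‖ ^ 2 = s ^ 2 := by
        rw [← real_inner_self_eq_norm_sq, inner_toR3, real_inner_self_eq_norm_sq, hssq]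
        simp [add_comm]
      nlinarith [norm_nonneg (toR3 (-p) 1), hspos, h2]
    rw [hts, inv_mul_cancel₀ (ne_of_gt hspos)]
  have hcc : ‖c‖ ^ 2 = h ^ 2 + q ^ 2 := by
    rw [← real_inner_self_eq_norm_sq, hc, inner_toR3, real_inner_self_eq_norm_sq, hhdef]
    ring
  have hch : h ≤ ‖c‖ := by nlinarith [norm_nonneg c, sq_nonneg q]
  have hcpos : 0 < ‖c‖ := lt_of_lt_of_le hh hch
  have htval : ⟪gauss p, c⟫ = s⁻¹ * (q - ⟪p, x₂ - x₁⟫) := by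
    rw [hgauss_eq, real_inner_smul_left, hc, inner_toR3, inner_neg_left]
    ring
  have htabs : |⟪gauss p, c⟫| ≤ K * h ^ 3 / 24 := by
    rw [htval, abs_mul, abs_of_pos (inv_pos.mpr hspos)]
    calc s⁻¹ * |q - ⟪p, x₂ - x₁⟫| ≤ 1 * (K * h ^ 3 / 24) := by
          apply mul_le_mul _ hE (abs_nonneg _) zero_le_one
          exact inv_le_one_of_one_le₀ hs1
      _ = K * h ^ 3 / 24 := one_mul _
  have hδ0 : 0 ≤ K * h ^ 2 / 24 := by positivity
  have hδ24 : K * h ^ 2 / 24 ≤ 1 / 24 := arith1 hK hh hsmall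
  have ht' : |⟪gauss p, c⟫| ≤ (K * h ^ 2 / 24) * ‖c‖ := by
    calc |⟪gauss p, c⟫| ≤ K * h ^ 3 / 24 := htabs
      _ = (K * h ^ 2 / 24) * h := by ring
      _ ≤ (K * h ^ 2 / 24) * ‖c‖ := mul_le_mul_of_nonneg_left hch hδ0
  obtain ⟨w, hw1, hw2, hw3⟩ := ortho_approx (gauss p) c hgn hδ0 hδ24 hcpos ht'
  exact ⟨w, hw1, hw2, hw3.trans (arith2 hK hh hsmall)⟩
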